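/- Let $(\tau_m)_{m \ge 0}$ with $\tau_0 = 0$ be an increasing sequence of stopping times with values in $\{1,\dots,n\} \cup \{\infty\}$ on a filtered probability space. For any $\theta \in (0,1)$ and $m \ge 1$, the probability of the event that $\tau_m \le n$ and $\mathbb{E}[\exp(-(\tau_{l+1}-\tau_l)/n) \mid \mathcal{F}_{\tau_l}] \le \theta$ for all $l = 0, 1, \dots, m-1$, is at most $e \cdot \theta^m$. -/

import Mathlib

open MeasureTheory ProbabilityTheory

/-- `exp(-d/n)`, with the convention `exp(-∞/n) = 0`. -/
noncomputable def expNegDiv (n : ℕ) (d : ℕ∞) : ℝ :=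
  WithTop.recTopCoe 0 (fun k : ℕ => Real.exp (-(k : ℝ) / n)) d

lemma expNegDiv_top (n : ℕ) : expNegDiv n ⊤ = 0 := rfl

lemma expNegDiv_coe (n k : ℕ) : expNegDiv n (k : ℕ∞) = Real.exp (-(k : ℝ) / n) := rfl

lemma expNegDiv_nonneg (n : ℕ) (d : ℕ∞) : 0 ≤ expNegDiv n d := by
  cases d with
  | top => rw [expNegDiv_top]
  | coe k => rw [expNegDiv_coe]; positivity

lemma expNegDiv_le_one (n : ℕ) (d : ℕ∞) : expNegDiv n d ≤ 1 := by
  cases d with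
  | top => rw [expNegDiv_top]; norm_num
  | coe k =>
      rw [expNegDiv_coe, Real.exp_le_one_iff]
      exact div_nonpos_of_nonpos_of_nonneg (neg_nonpos.mpr (Nat.cast_nonneg k))
        (Nat.cast_nonneg n)

theorem stopping_time_geometric_bound {Ω : Type*} {m0 : MeasurableSpace Ω}
    (μ : Measure Ω) [IsProbabilityMeasure μ]
    (n : ℕ) (hn : 1 ≤ n)
    (𝓕 : Filtration ℕ∞ m0)
    (τ : ℕ → Ω → ℕ∞) (hτ : ∀ m, IsStoppingTime 𝓕 (fun ω => (τ m ω : WithTop ℕ∞)))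
    (hτ0 : ∀ ω, τ 0 ω = 0)
    (hmono : ∀ m ω, τ m ω ≤ τ (m + 1) ω)
    (hval : ∀ m, 1 ≤ m → ∀ ω, τ m ω = ⊤ ∨ (1 ≤ τ m ω ∧ τ m ω ≤ (n : ℕ∞)))
    (θ : ℝ) (hθ0 : 0 < θ) (hθ1 : θ < 1) (m : ℕ) (hm : 1 ≤ m) :
    μ {ω | τ m ω ≤ (n : ℕ∞) ∧ ∀ l < m,
        (μ[fun ω' => expNegDiv n (τ (l + 1) ω' - τ l ω') | (hτ l).measurableSpace]) ω ≤ θ}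
      ≤ ENNReal.ofReal (Real.exp 1 * θ ^ m) := by
  classical
  set mk : ℕ → MeasurableSpace Ω := fun l => (hτ l).measurableSpace with hmk
  have hmono' : ∀ ω, Monotone fun l => τ l ω :=
    fun ω => monotone_nat_of_le_succ (fun l => hmono l ω)
  have hFmono : ∀ {k l : ℕ}, k ≤ l → mk k ≤ mk l := fun {k l} h =>
    (hτ k).measurableSpace_mono (hτ l) (fun ω => WithTop.coe_le_coe.mpr (hmono' ω h))
  have hFle : ∀ l, mk l ≤ m0 := fun l => (hτ l).measurableSpace_le
  have hτmeas : ∀ l, Measurable[mk l] (τ l) := by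
    intro l
    exact @measurable_to_countable' ℕ∞ Ω _ _ (mk l) (τ l)
      (fun i => by
        have h := (hτ l).measurableSet_eq_of_countable' i
        convert h using 1; ext ω; simp)
  set X : ℕ → Ω → ℝ := fun l ω => expNegDiv n (τ (l + 1) ω - τ l ω) with hXdef
  have hXmeas : ∀ l, Measurable[mk (l + 1)] (X l) := by
    intro l
    have h1 : Measurable[mk (l + 1)] (τ (l + 1)) := hτmeas (l + 1)
    have h2 : Measurable[mk (l + 1)] (τ l) :=
      (hτmeas l).mono (hFmono (Nat.le_succ l)) le_rfl
    have h3 : Measurable fun p : ℕ∞ × ℕ∞ => expNegDiv n (p.1 - p.2) :=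
      measurable_of_countable _
    exact h3.comp (h1.prodMk h2)
  have hX0 : ∀ l ω, 0 ≤ X l ω := fun l ω => expNegDiv_nonneg _ _
  have hX1 : ∀ l ω, X l ω ≤ 1 := fun l ω => expNegDiv_le_one _ _
  -- integrability helper
  have hint : ∀ g : Ω → ℝ, Measurable g → (∀ ω, 0 ≤ g ω) → (∀ ω, g ω ≤ 1) →
      Integrable g μ := by
    intro g hg h0 h1
    refine (integrable_const (1 : ℝ)).mono' hg.aestronglyMeasurable (ae_of_all _ fun ω => ?_)
    rw [Real.norm_eq_abs, abs_of_nonneg (h0 ω)]; exact h1 ω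
  set Y : ℕ → Ω → ℝ := fun l => μ[X l | mk l] with hYdef
  set C : ℕ → Set Ω := fun k => {ω | ∀ l < k, Y l ω ≤ θ} with hCdef
  have hBmeas : ∀ l, MeasurableSet[mk l] {ω | Y l ω ≤ θ} := by
    intro l
    exact (stronglyMeasurable_condExp (m := mk l) (f := X l) (μ := μ)).measurable
      (measurableSet_Iic (a := θ))
  have hCmeas : ∀ k j : ℕ, k ≤ j + 1 → MeasurableSet[mk j] (C k) := by
    intro k j hkj
    have hCeq : C k = ⋂ l, ⋂ (_ : l < k), {ω | Y l ω ≤ θ} := by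
      ext ω; simp [hCdef]
    rw [hCeq]
    exact MeasurableSet.iInter fun l => MeasurableSet.iInter fun hl =>
      hFmono (Nat.le_of_lt_succ (lt_of_lt_of_le hl hkj)) _ (hBmeas l)
  have hCsub : ∀ k, C (k + 1) ⊆ C k := fun k ω hω l hl => hω l (hl.trans (Nat.lt_succ_self k))
  -- partial products
  have hprod_meas : ∀ k, Measurable[mk k] fun ω => ∏ l ∈ Finset.range k, X l ω := by
    intro k
    exact Finset.measurable_prod _ fun l hl =>
      (hXmeas l).mono (hFmono (Nat.succ_le_of_lt (Finset.mem_range.mp hl))) le_rfl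
  have hprod0 : ∀ k ω, 0 ≤ ∏ l ∈ Finset.range k, X l ω :=
    fun k ω => Finset.prod_nonneg fun l _ => hX0 l ω
  have hprod1 : ∀ k ω, ∏ l ∈ Finset.range k, X l ω ≤ 1 :=
    fun k ω => Finset.prod_le_one (fun l _ => hX0 l ω) (fun l _ => hX1 l ω)
  have hind0 : ∀ (s : Set Ω) (ω : Ω), 0 ≤ Set.indicator s (fun _ => (1:ℝ)) ω :=
    fun s ω => Set.indicator_nonneg (fun _ _ => zero_le_one) ω
  have hind1 : ∀ (s : Set Ω) (ω : Ω), Set.indicator s (fun _ => (1:ℝ)) ω ≤ 1 := by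
    intro s ω; by_cases h : ω ∈ s <;> simp [h]
  -- general shape: G k s ω = (∏_{l<k} X l ω) * 1_s ω
  have hGmeas : ∀ k k₂ : ℕ, k₂ ≤ k + 1 → Measurable[mk k]
      fun ω => (∏ l ∈ Finset.range k, X l ω) * Set.indicator (C k₂) (fun _ => (1:ℝ)) ω :=
    fun k k₂ h => (hprod_meas k).mul (measurable_const.indicator (hCmeas k₂ k h))
  have hG0 : ∀ k (s : Set Ω) ω,
      0 ≤ (∏ l ∈ Finset.range k, X l ω) * Set.indicator s (fun _ => (1:ℝ)) ω :=
    fun k s ω => mul_nonneg (hprod0 k ω) (hind0 s ω)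
  have hG1 : ∀ k (s : Set Ω) ω,
      (∏ l ∈ Finset.range k, X l ω) * Set.indicator s (fun _ => (1:ℝ)) ω ≤ 1 :=
    fun k s ω => mul_le_one₀ (hprod1 k ω) (hind0 s ω) (hind1 s ω)
  have hGint : ∀ k k₂ : ℕ, k₂ ≤ k + 1 → Integrable
      (fun ω => (∏ l ∈ Finset.range k, X l ω) * Set.indicator (C k₂) (fun _ => (1:ℝ)) ω) μ :=
    fun k k₂ h => hint _ ((hGmeas k k₂ h).mono (hFle k) le_rfl) (hG0 k _) (hG1 k _)
  -- key induction
  have key : ∀ k : ℕ, ∫ ω, (∏ l ∈ Finset.range k, X l ω) *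
      Set.indicator (C k) (fun _ => (1:ℝ)) ω ∂μ ≤ θ ^ k := by
    intro k
    induction k with
    | zero =>
        have hC0 : C 0 = Set.univ := by ext ω; simp [hCdef]
        simp [hC0]
    | succ k ih =>
        set f : Ω → ℝ := fun ω =>
          (∏ l ∈ Finset.range k, X l ω) * Set.indicator (C (k+1)) (fun _ => (1:ℝ)) ω with hfdef
        have hfmeas : Measurable[mk k] f := hGmeas k (k+1) le_rfl
        have hfint : Integrable f μ := hGint k (k+1) le_rfl
        have hf0 : ∀ ω, 0 ≤ f ω := hG0 k _
        have hf1 : ∀ ω, f ω ≤ 1 := hG1 k _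
        have hXkint : Integrable (X k) μ :=
          hint _ ((hXmeas k).mono (hFle (k+1)) le_rfl) (hX0 k) (hX1 k)
        have hfXint : Integrable (f * X k) μ := by
          refine hint _ (((hfmeas.mono (hFle k) le_rfl)).mul
            ((hXmeas k).mono (hFle (k+1)) le_rfl)) ?_ ?_
          · exact fun ω => mul_nonneg (hf0 ω) (hX0 k ω)
          · exact fun ω => mul_le_one₀ (hf1 ω) (hX0 k ω) (hX1 k ω)
        -- rewrite integrand
        have hstep0 : (fun ω => (∏ l ∈ Finset.range (k+1), X l ω) *
            Set.indicator (C (k+1)) (fun _ => (1:ℝ)) ω) = f * X k := by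
          funext ω
          simp only [Pi.mul_apply, hfdef, Finset.prod_range_succ]
          ring
        haveI : SigmaFinite (μ.trim (hFle k)) := inferInstance
        have hcm := condExp_mul_of_stronglyMeasurable_left (μ := μ) (m := mk k)
          hfmeas.stronglyMeasurable hfXint hXkint
        have hstep1 : ∫ ω, (f * X k) ω ∂μ = ∫ ω, f ω * Y k ω ∂μ := by
          rw [← integral_condExp (hFle k) (f := f * X k)]
          refine integral_congr_ae (hcm.trans ?_)
          exact Filter.EventuallyEq.rfl
        have hfYint : Integrable (fun ω => f ω * Y k ω) μ := by
          refine (integrable_condExp (m := mk k) (f := X k)).bdd_mul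
            ((hfmeas.mono (hFle k) le_rfl)).aestronglyMeasurable (c := 1) (ae_of_all _ fun ω => ?_)
          rw [Real.norm_eq_abs, abs_of_nonneg (hf0 ω)]; exact hf1 ω
        have hpt : ∀ ω, f ω * Y k ω ≤ θ * f ω := by
          intro ω
          by_cases hω : ω ∈ C (k+1)
          · have h1 : Y k ω ≤ θ := hω k (Nat.lt_succ_self k)
            calc f ω * Y k ω ≤ f ω * θ := mul_le_mul_of_nonneg_left h1 (hf0 ω)
              _ = θ * f ω := mul_comm _ _
          · have : f ω = 0 := by simp [hfdef, Set.indicator_of_notMem hω]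
            simp [this]
        have hfleF : ∀ ω, f ω ≤ (∏ l ∈ Finset.range k, X l ω) *
            Set.indicator (C k) (fun _ => (1:ℝ)) ω := by
          intro ω
          refine mul_le_mul_of_nonneg_left ?_ (hprod0 k ω)
          exact Set.indicator_le_indicator_of_subset (hCsub k) (fun _ => zero_le_one) ω
        calc ∫ ω, (∏ l ∈ Finset.range (k+1), X l ω) *
              Set.indicator (C (k+1)) (fun _ => (1:ℝ)) ω ∂μ
            = ∫ ω, (f * X k) ω ∂μ := by rw [hstep0]
          _ = ∫ ω, f ω * Y k ω ∂μ := hstep1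
          _ ≤ ∫ ω, θ * f ω ∂μ := integral_mono hfYint (hfint.const_mul θ) hpt
          _ = θ * ∫ ω, f ω ∂μ := by rw [integral_const_mul]
          _ ≤ θ * ∫ ω, (∏ l ∈ Finset.range k, X l ω) *
              Set.indicator (C k) (fun _ => (1:ℝ)) ω ∂μ := by
              refine mul_le_mul_of_nonneg_left ?_ hθ0.le
              exact integral_mono hfint (hGint k k (Nat.le_succ k)) hfleF
          _ ≤ θ * θ ^ k := mul_le_mul_of_nonneg_left ih hθ0.le
          _ = θ ^ (k+1) := (pow_succ' θ k).symm
  -- the event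
  set A : Set Ω := {ω | τ m ω ≤ (n : ℕ∞)} ∩ C m with hAdef
  have hgoal : {ω | τ m ω ≤ (n : ℕ∞) ∧ ∀ l < m,
      (μ[fun ω' => expNegDiv n (τ (l + 1) ω' - τ l ω') | (hτ l).measurableSpace]) ω ≤ θ} = A := rfl
  rw [hgoal]
  have hAmeas : MeasurableSet A := by
    refine MeasurableSet.inter ?_ (hFle m _ (hCmeas m m (Nat.le_succ m)))
    exact 𝓕.le (n : ℕ∞) _ (by
      convert (hτ m).measurableSet_le (n : ℕ∞) using 1; ext ω; exact (WithTop.coe_le_coe (b := τ m ω) (a := (n : ℕ∞))).symm)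
  -- lower bound on the product on A
  have hnR : (0:ℝ) < n := by exact_mod_cast hn
  have hA_lower : ∀ ω ∈ A, Real.exp (-1) ≤ ∏ l ∈ Finset.range m, X l ω := by
    rintro ω ⟨hτn, -⟩
    have hτn' : τ m ω ≤ (n : ℕ∞) := hτn
    have hfin : ∀ l, l ≤ m → τ l ω ≤ (n : ℕ∞) := fun l hl => (hmono' ω hl).trans hτn'
    have hne : ∀ l, l ≤ m → τ l ω ≠ ⊤ :=
      fun l hl => ((hfin l hl).trans_lt (WithTop.coe_lt_top n)).ne
    set t : ℕ → ℕ := fun l => (τ l ω).toNat with htdef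
    have ht : ∀ l, l ≤ m → τ l ω = (t l : ℕ∞) := fun l hl => (ENat.coe_toNat (hne l hl)).symm
    have htmono : ∀ l, l < m → t l ≤ t (l + 1) := fun l hl =>
      ENat.toNat_le_toNat (hmono l ω) (hne (l+1) hl)
    have hXle : ∀ l ∈ Finset.range m, X l ω = Real.exp (((t l : ℝ) - t (l+1)) / n) := by
      intro l hl
      have hl' := Finset.mem_range.mp hl
      have e1 : τ (l + 1) ω - τ l ω = ((t (l+1) - t l : ℕ) : ℕ∞) := by
        rw [ht (l+1) hl', ht l hl'.le]
        exact_mod_cast rfl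
      have e2 : ((t (l+1) - t l : ℕ) : ℝ) = (t (l+1) : ℝ) - t l := by
        rw [Nat.cast_sub (htmono l hl')]
      rw [hXdef]
      show expNegDiv n (τ (l + 1) ω - τ l ω) = _
      rw [e1, expNegDiv_coe, e2]
      ring_nf
    have hprodeq : ∏ l ∈ Finset.range m, X l ω = Real.exp (-(t m : ℝ) / n) := by
      rw [Finset.prod_congr rfl hXle, ← Real.exp_sum]
      congr 1
      have hsum2 : ∑ l ∈ Finset.range m, ((t (l+1) : ℝ) - t l) = (t m : ℝ) - t 0 := by
        simpa using Finset.sum_range_sub (fun i => ((t i : ℝ))) m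
      have hstep : ∀ l ∈ Finset.range m, ((t l : ℝ) - t (l+1)) / n
          = -(((t (l+1) : ℝ) - t l) / n) := fun l _ => by ring
      have ht0 : t 0 = 0 := by simp [htdef, hτ0 ω]
      rw [Finset.sum_congr rfl hstep, Finset.sum_neg_distrib, ← Finset.sum_div, hsum2, ht0]
      push_cast
      ring
    rw [hprodeq]
    apply Real.exp_le_exp.mpr
    rw [neg_div, neg_le_neg_iff, div_le_one hnR]
    have : t m ≤ n := by
      have := ENat.toNat_le_toNat hτn' (by simp)
      simpa using this
    exact_mod_cast this
  -- conclude
  have hptA : ∀ ω, Set.indicator A (fun _ => Real.exp (-1)) ω ≤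
      (∏ l ∈ Finset.range m, X l ω) * Set.indicator (C m) (fun _ => (1:ℝ)) ω := by
    intro ω
    by_cases hω : ω ∈ A
    · rw [Set.indicator_of_mem hω]
      have h1 : Set.indicator (C m) (fun _ => (1:ℝ)) ω = 1 :=
        Set.indicator_of_mem hω.2 _
      rw [h1, mul_one]
      exact hA_lower ω hω
    · rw [Set.indicator_of_notMem hω]
      exact hG0 m _ ω
  have hintA : Integrable (Set.indicator A (fun _ => Real.exp (-1)) : Ω → ℝ) μ :=
    (integrable_const _).indicator hAmeas
  have hineq : Real.exp (-1) * (μ A).toReal ≤ θ ^ m := by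
    have h1 : ∫ ω, Set.indicator A (fun _ => Real.exp (-1)) ω ∂μ
        = (μ A).toReal • Real.exp (-1) := integral_indicator_const _ hAmeas
    calc Real.exp (-1) * (μ A).toReal
        = ∫ ω, Set.indicator A (fun _ => Real.exp (-1)) ω ∂μ := by
          rw [h1, smul_eq_mul, mul_comm]
      _ ≤ ∫ ω, (∏ l ∈ Finset.range m, X l ω) *
            Set.indicator (C m) (fun _ => (1:ℝ)) ω ∂μ :=
          integral_mono hintA (hGint m m (Nat.le_succ m)) hptA
      _ ≤ θ ^ m := key m
  have htoReal : (μ A).toReal ≤ Real.exp 1 * θ ^ m := by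
    have he : (0:ℝ) < Real.exp (-1) := Real.exp_pos _
    rw [mul_comm] at hineq
    have := (le_div_iff₀ he).mpr hineq
    rwa [div_eq_mul_inv, ← Real.exp_neg, neg_neg, mul_comm] at this
  calc μ A = ENNReal.ofReal ((μ A).toReal) := (ENNReal.ofReal_toReal (measure_ne_top μ A)).symm
    _ ≤ ENNReal.ofReal (Real.exp 1 * θ ^ m) := ENNReal.ofReal_le_ofReal htoReal
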